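/- Let f : V → ℝ ∪ {+∞} be a proper convex function and let ṽ_i, v_i ∈ V for i = 1,…,k satisfy v_i ∈ ∂f(ṽ_i). Define ṽ^a = (1/k)∑ṽ_i, v^a = (1/k)∑v_i, and ε^a = (1/k)∑⟨v_i, ṽ_i − ṽ^a⟩. Then v^a ∈ ∂_{ε^a} f(ṽ^a). -/

import Mathlib

open RealInnerProductSpace

lemma jensen_avg {V : Type*} [AddCommGroup V] [Module ℝ V] (f : V → EReal)
    (hnb : ∀ v, f v ≠ ⊥)
    (hconv : ∀ a b : V, ∀ t : ℝ, 0 ≤ t → t ≤ 1 →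
      f (t • a + (1 - t) • b) ≤ (t : EReal) * f a + ((1 - t : ℝ) : EReal) * f b)
    (c : ℕ → ℝ) (p : ℕ → V) :
    ∀ n : ℕ, 0 < n → (∀ i < n, f (p i) = ((c i : ℝ) : EReal)) →
    f ((1 / (n : ℝ)) • ∑ i ∈ Finset.range n, p i) ≤
      (((1 / (n : ℝ)) * ∑ i ∈ Finset.range n, c i : ℝ) : EReal) := by
  intro n
  induction n with
  | zero => intro h; omega
  | succ n ih =>
    intro _ hc
    rcases Nat.eq_zero_or_pos n with hn0 | hn
    · subst hn0; simp [hc 0 (by omega)]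
    · have hb := ih hn (fun i hi => hc i (by omega))
      set L : ℝ := (1 / (n : ℝ)) * ∑ i ∈ Finset.range n, c i with hL
      set b : V := (1 / (n : ℝ)) • ∑ i ∈ Finset.range n, p i with hbdef
      have hbt : f b ≠ ⊤ := fun h => by simp [h] at hb
      obtain ⟨d, hd⟩ : ∃ d : ℝ, f b = (d : EReal) :=
        ⟨(f b).toReal, (EReal.coe_toReal hbt (hnb b)).symm⟩
      have hdL : d ≤ L := by rwa [hd, EReal.coe_le_coe_iff] at hb
      have hnpos : (0:ℝ) < n := by exact_mod_cast hn
      have hn1pos : (0:ℝ) < (n:ℝ) + 1 := by linarith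
      set t : ℝ := 1 / ((n:ℝ) + 1) with ht
      have htpos : 0 ≤ t := by positivity
      have ht1 : t ≤ 1 := by rw [ht]; rw [div_le_one hn1pos]; linarith
      have hpt : (1 / ((n:ℕ).succ : ℝ)) • ∑ i ∈ Finset.range (n+1), p i
          = t • p n + (1 - t) • b := by
        rw [Finset.sum_range_succ, hbdef, smul_smul]
        push_cast
        rw [smul_add]
        have h1 : (1 - t) * (1 / (n:ℝ)) = 1 / ((n:ℝ)+1) := by
          rw [ht]
          field_simp
          ring
        rw [h1, ht, add_comm]
      rw [hpt]
      calc f (t • p n + (1 - t) • b)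
          ≤ (t : EReal) * f (p n) + ((1 - t : ℝ) : EReal) * f b :=
            hconv (p n) b t htpos ht1
        _ = ((t * c n + (1 - t) * d : ℝ) : EReal) := by
            rw [hc n (by omega), hd, ← EReal.coe_mul, ← EReal.coe_mul, ← EReal.coe_add]
        _ ≤ _ := by
            rw [EReal.coe_le_coe_iff]
            rw [Finset.sum_range_succ]
            have h2 : (1 - t) * d ≤ (1 - t) * L :=
              mul_le_mul_of_nonneg_left hdL (by linarith)
            have h3 : t * c n + (1 - t) * L
                = (1 / (((n:ℕ).succ : ℝ))) * (∑ i ∈ Finset.range n, c i + c n) := by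
              rw [hL, ht]
              push_cast
              field_simp
              ring
            linarith
theorem stmt_7 {V : Type*} [NormedAddCommGroup V] [InnerProductSpace ℝ V]
    [FiniteDimensional ℝ V] (f : V → EReal)
    (hfne : ∃ v, f v ≠ ⊤) (hfnb : ∀ v, f v ≠ ⊥)
    (hconv : ∀ a b : V, ∀ t : ℝ, 0 ≤ t → t ≤ 1 →
      f (t • a + (1 - t) • b) ≤ (t : EReal) * f a + ((1 - t : ℝ) : EReal) * f b)
    (k : ℕ) (hk : 0 < k) (v2 v : ℕ → V)
    (hin : ∀ i ∈ Finset.range k, ∀ w : V,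
      f (v2 i) + ((⟪v i, w - v2 i⟫ : ℝ) : EReal) ≤ f w)
    (wa va : V) (εa : ℝ)
    (hwa : wa = (1 / (k : ℝ)) • ∑ j ∈ Finset.range k, v2 j)
    (hva : va = (1 / (k : ℝ)) • ∑ j ∈ Finset.range k, v j)
    (hεa : εa = (1 / (k : ℝ)) * ∑ i ∈ Finset.range k, ⟪v i, v2 i - wa⟫) :
    ∀ w : V, f wa + ((⟪va, w - wa⟫ - εa : ℝ) : EReal) ≤ f w := by
  obtain ⟨w0, hw0⟩ := hfne
  set c : ℕ → ℝ := fun i => (f (v2 i)).toReal with hcdef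
  have hc : ∀ i < k, f (v2 i) = ((c i : ℝ) : EReal) := by
    intro i hi
    have htop : f (v2 i) ≠ ⊤ := by
      intro h
      have := hin i (Finset.mem_range.mpr hi) w0
      rw [h] at this
      have : (⊤ : EReal) ≤ f w0 := by
        rwa [EReal.top_add_of_ne_bot (by exact_mod_cast EReal.coe_ne_bot _)] at this
      exact hw0 (top_le_iff.mp this)
    exact (EReal.coe_toReal htop (hfnb _)).symm
  have hjen : f wa ≤ (((1 / (k : ℝ)) * ∑ i ∈ Finset.range k, c i : ℝ) : EReal) := by
    rw [hwa]
    exact jensen_avg f hfnb hconv c v2 k hk hc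
  set L : ℝ := (1 / (k : ℝ)) * ∑ i ∈ Finset.range k, c i with hLdef
  intro w
  rcases eq_or_ne (f w) ⊤ with hwt | hwt
  · rw [hwt]; exact le_top
  obtain ⟨d, hd⟩ : ∃ d : ℝ, f w = (d : EReal) :=
    ⟨(f w).toReal, (EReal.coe_toReal hwt (hfnb _)).symm⟩
  have hkpos : (0:ℝ) < k := by exact_mod_cast hk
  -- each i : c i + ⟪v i, w - v2 i⟫ ≤ d
  have hdi : ∀ i ∈ Finset.range k, c i + ⟪v i, w - v2 i⟫ ≤ d := by
    intro i hi
    have := hin i hi w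
    rw [hc i (Finset.mem_range.mp hi), hd, ← EReal.coe_add, EReal.coe_le_coe_iff] at this
    exact this
  -- algebra: L + ⟪va, w - wa⟫ - εa = (1/k) * ∑ (c i + ⟪v i, w - v2 i⟫)
  have hinner : ⟪va, w - wa⟫ = (1 / (k:ℝ)) * ∑ i ∈ Finset.range k, ⟪v i, w - wa⟫ := by
    rw [hva, real_inner_smul_left, sum_inner]
  have halg : L + (⟪va, w - wa⟫ - εa)
      = (1 / (k:ℝ)) * ∑ i ∈ Finset.range k, (c i + ⟪v i, w - v2 i⟫) := by
    rw [hinner, hεa, hLdef, ← mul_sub, ← mul_add, Finset.sum_add_distrib,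
      ← Finset.sum_sub_distrib]
    congr 1
    congr 1
    apply Finset.sum_congr rfl
    intro i _
    rw [inner_sub_right, inner_sub_right, inner_sub_right]
    ring
  have hsum : (1 / (k:ℝ)) * ∑ i ∈ Finset.range k, (c i + ⟪v i, w - v2 i⟫) ≤ d := by
    have h1 : ∑ i ∈ Finset.range k, (c i + ⟪v i, w - v2 i⟫) ≤ ∑ i ∈ Finset.range k, d :=
      Finset.sum_le_sum hdi
    rw [Finset.sum_const, Finset.card_range, nsmul_eq_mul] at h1
    rw [div_mul_eq_mul_div, one_mul, div_le_iff₀ hkpos]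
    linarith [h1]
  calc f wa + ((⟪va, w - wa⟫ - εa : ℝ) : EReal)
      ≤ (L : EReal) + ((⟪va, w - wa⟫ - εa : ℝ) : EReal) := add_le_add_left hjen _
    _ = ((L + (⟪va, w - wa⟫ - εa) : ℝ) : EReal) := (EReal.coe_add _ _).symm
    _ ≤ (d : EReal) := by rw [EReal.coe_le_coe_iff, halg]; exact hsum
    _ = f w := hd.symm
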